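/- arXiv:2311.16322 — 2 statements merged into one kernel-verified Lean document; each statement's English description precedes it below -/
import Mathlib

section
/- Let f, g : {X_i} → {Y_i} be morphisms of interaction spaces that are homotopic (connected by a finite chain of formal homotopies). Then the induced maps on interaction singular homology are equal: H_*(f) = H_*(g). -/
open scoped unitInterval

universe u

/-- An `n`-interaction space: a topological space `X` together with a covering
by `n` subspaces. -/
structure InterSp (n : ℕ) : Type (u + 1) where
  X : Type u
  [top : TopologicalSpace X]
  C : Fin n → Set X
  covers : (⋃ i, C i) = Set.univ

attribute [instance] InterSp.top

namespace InterSp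

variable {n : ℕ}

/-- A morphism of `n`-interaction spaces: a family of continuous maps
`f i : X i → Y i` such that, for `i ≠ j`, `f i u = f j v` iff `u = v`
(as points of the ambient space). -/
structure Mor (A B : InterSp n) where
  f : ∀ i, C(A.C i, B.C i)
  cond : ∀ i j, i ≠ j → ∀ (u : A.C i) (v : A.C j),
    ((f i u : B.X) = ((f j v : B.C j) : B.X)) ↔ ((u : A.X) = ((v : A.C j) : A.X))

/-- A formal homotopy between two morphisms of interaction spaces: a morphism of
interaction spaces `(X × I, {Xᵢ × I}) → (Y, {Yᵢ})` restricting to `f` at `0` and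
`g` at `1`. -/
structure FHtpy {A B : InterSp n} (f g : Mor A B) where
  H : ∀ i, C((A.C i) × I, B.C i)
  cond : ∀ i j, i ≠ j → ∀ (u : A.C i) (v : A.C j) (s t : I),
    ((H i (u, s) : B.X) = ((H j (v, t) : B.C j) : B.X)) ↔ ((u : A.X) = ((v : A.C j) : A.X))
  h0 : ∀ i u, H i (u, 0) = f.f i u
  h1 : ∀ i u, H i (u, 1) = g.f i u

/-- `f` and `g` are formally homotopic. -/
def FHomotopic {A B : InterSp n} (f g : Mor A B) : Prop := Nonempty (FHtpy f g)

/-- `f` and `g` are homotopic: connected by a finite chain of formal homotopies. -/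
def Homotopic {A B : InterSp n} (f g : Mor A B) : Prop :=
  Relation.ReflTransGen FHomotopic f g

end InterSp

/-- The standard topological `q`-simplex. -/
def SimplexT (q : ℕ) : Type :=
  {f : Fin (q + 1) → ℝ // (∀ i, 0 ≤ f i) ∧ ∑ i, f i = 1}

instance (q : ℕ) : TopologicalSpace (SimplexT q) := by
  unfold SimplexT; infer_instance

/-- The `r`-th face inclusion `Δ^q → Δ^{q+1}`. -/
noncomputable def faceCM (q : ℕ) (r : Fin (q + 2)) : C(SimplexT q, SimplexT (q + 1)) where
  toFun f :=
    ⟨fun j => ∑ i ∈ Finset.univ.filter (fun i => r.succAbove i = j), f.1 i,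
      ⟨fun j => Finset.sum_nonneg fun i _ => f.2.1 i, by
        rw [Finset.sum_fiberwise]
        exact f.2.2⟩⟩
  continuous_toFun := by
    apply Continuous.subtype_mk
    exact continuous_pi fun j =>
      continuous_finset_sum _ fun i _ => (continuous_apply i).comp continuous_subtype_val

/-- A singular simplex (of some dimension) in `X`. -/
abbrev SST (X : Type u) [TopologicalSpace X] : Type u := Σ q : ℕ, C(SimplexT q, X)

variable {n : ℕ}

/-- A tuple of singular simplices, one in each subspace `X i`. -/
def TupF (A : InterSp n) : Type _ := ∀ i, SST ↥(A.C i)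

/-- The total degree of a tuple of singular simplices. -/
def degT {A : InterSp n} (sg : TupF A) : ℕ := ∑ i, (sg i).1

/-- A tuple of singular simplices of total degree `p`:
a basis element of `(⊗ᵢ S₋(Xᵢ))ₚ`. -/
def Tup (A : InterSp n) (p : ℕ) : Type _ := {sg : TupF A // degT sg = p}

variable (R : Type) [CommRing R]

/-- The degree-`p` part of the tensor product `⊗ᵢ S₋(Xᵢ)` of the singular
chain complexes of the subspaces, over `R`. -/
abbrev Ch (A : InterSp n) (p : ℕ) : Type _ := Tup A p →₀ R

/-- The summand of the tensor-product differential acting on the `i`-th factor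
of a basis tuple, with its Koszul sign. -/
noncomputable def dTerm {A : InterSp n} {p : ℕ} (sg : Tup A (p + 1)) (i : Fin n) :
    Ch R A p :=
  match h : sg.1 i with
  | ⟨0, _⟩ => 0
  | ⟨q + 1, f⟩ =>
    ∑ r : Fin (q + 2),
      Finsupp.single
        (⟨Function.update sg.1 i ⟨q, f.comp (faceCM q r)⟩, by
          have h2 := sg.2
          have hi : (sg.1 i).1 = q + 1 := by rw [h]
          show degT _ = p
          unfold degT at h2 ⊢
          have e1 : ∀ k, ((Function.update sg.1 i ⟨q, f.comp (faceCM q r)⟩) k).1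
              = Function.update (fun k => (sg.1 k).1) i q k := by
            intro k
            rcases eq_or_ne k i with rfl | hk
            · exact (congrArg Sigma.fst (Function.update_self k _ sg.1)).trans
                (Function.update_self k q (fun k => (sg.1 k).1)).symm
            · exact (congrArg Sigma.fst (Function.update_of_ne hk _ sg.1)).trans
                (Function.update_of_ne hk q (fun k => (sg.1 k).1)).symm
          rw [Finset.sum_congr rfl fun k _ => e1 k,
            Finset.sum_update_of_mem (Finset.mem_univ i)]
          have e2 := Finset.sum_eq_sum_sdiff_singleton_add (Finset.mem_univ i)
            (fun k => (sg.1 k).1)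
          omega⟩ : Tup A p)
        ((((-1 : ℤ) ^
          ((∑ k ∈ Finset.univ.filter (fun k : Fin n => (k : ℕ) < (i : ℕ)), (sg.1 k).1)
            + (r : ℕ)) : ℤ) : R))

/-- The differential of the tensor product `⊗ᵢ S₋(Xᵢ)` of singular chain
complexes, `d(sg₁ ⊗ ⋯ ⊗ sgₙ) = Σᵢ (-1)^{dim sg₁ + ⋯ + dim sgᵢ₋₁} sg₁ ⊗ ⋯ ⊗ dsgᵢ ⊗ ⋯ ⊗ sgₙ`. -/
noncomputable def dCh (A : InterSp n) (p : ℕ) : Ch R A (p + 1) →ₗ[R] Ch R A p :=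
  Finsupp.lift (Ch R A p) R (Tup A (p + 1)) fun sg => ∑ i : Fin n, dTerm R sg i

/-- The differential, from degree `p` to degree `p - 1` (zero in degree `0`). -/
noncomputable def dFrom (A : InterSp n) : ∀ p, Ch R A p →ₗ[R] Ch R A (p - 1)
  | 0 => 0
  | q + 1 => dCh R A q

/-- The common intersection of the images of a tuple of singular simplices, in
the ambient space, is empty. -/
def interEmpty {A : InterSp n} (sg : TupF A) : Prop :=
  (⋂ i, Subtype.val '' Set.range (sg i).2) = (∅ : Set A.X)

/-- The submodule `T₋({Xᵢ})` of `⊗ᵢ S₋(Xᵢ)` generated by the elementary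
tensors of singular simplices whose images have empty common intersection. -/
noncomputable def Tsub (A : InterSp n) (p : ℕ) : Submodule R (Ch R A p) :=
  Submodule.span R {x | ∃ sg : Tup A p, interEmpty sg.1 ∧ x = Finsupp.single sg 1}

/-- The identity morphism of an interaction space. -/
def InterSp.Mor.id (A : InterSp n) : InterSp.Mor A A where
  f _ := ContinuousMap.id _
  cond _ _ _ _ _ := Iff.rfl

/-- Composition of morphisms of interaction spaces. -/
def InterSp.Mor.comp {A B C' : InterSp n} (g : InterSp.Mor B C') (f : InterSp.Mor A B) :
    InterSp.Mor A C' where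
  f i := (g.f i).comp (f.f i)
  cond i j hij u v := (g.cond i j hij (f.f i u) (f.f j v)).trans (f.cond i j hij u v)

/-- The chain map `⊗ᵢ fᵢ^♯` induced in degree `p` by a morphism of interaction
spaces, on the tensor product of singular chain complexes. -/
noncomputable def chMap {A B : InterSp n} (f : InterSp.Mor A B) (p : ℕ) :
    Ch R A p →ₗ[R] Ch R B p :=
  Finsupp.lift (Ch R B p) R (Tup A p) fun sg =>
    Finsupp.single ⟨fun i => ⟨(sg.1 i).1, (f.f i).comp (sg.1 i).2⟩, sg.2⟩ (1 : R)

namespace Stmt14Aux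

universe v

open Finset

lemma succAbove_val {m : ℕ} (s : Fin (m + 1)) (k : Fin m) :
    ((s.succAbove k : Fin (m + 1)) : ℕ) = if (k : ℕ) < (s : ℕ) then (k : ℕ) else (k : ℕ) + 1 := by
  rcases Nat.lt_or_ge (k : ℕ) (s : ℕ) with h | h
  · rw [if_pos h, Fin.succAbove_of_castSucc_lt _ _ (by simpa [Fin.lt_def] using h)]
    simp
  · rw [if_neg (by omega), Fin.succAbove_of_le_castSucc _ _ (by simpa [Fin.le_def] using h)]
    simp

lemma predAbove_val {m : ℕ} (r : Fin m) (i : Fin (m + 1)) :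
    ((r.predAbove i : Fin m) : ℕ) = if (r : ℕ) < (i : ℕ) then (i : ℕ) - 1 else (i : ℕ) := by
  rcases Nat.lt_or_ge (r : ℕ) (i : ℕ) with h | h
  · rw [if_pos h, Fin.predAbove_of_castSucc_lt _ _ (by simpa [Fin.lt_def] using h)]
    simp
  · rw [if_neg (by omega), Fin.predAbove_of_le_castSucc _ _ (by simpa [Fin.le_def] using h)]
    simp

lemma sum_fiber_comp {α β : Type*} [Fintype α] [Fintype β] [DecidableEq β]
    (g : α → β) (P : β → Prop) [DecidablePred P] (t : α → ℝ) :
    (∑ i ∈ Finset.univ.filter P, ∑ k ∈ Finset.univ.filter (fun k => g k = i), t k)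
      = ∑ k ∈ Finset.univ.filter (fun k => P (g k)), t k := by
  rw [← Finset.sum_fiberwise_of_maps_to
      (t := Finset.univ.filter P) (g := g)
      (fun i hi => by simpa using (Finset.mem_filter.1 hi).2) t]
  refine Finset.sum_congr rfl fun j hj => Finset.sum_congr ?_ fun _ _ => rfl
  have hPj := (Finset.mem_filter.1 hj).2
  ext k
  simp only [Finset.mem_filter, Finset.mem_univ, true_and]
  exact ⟨fun h => ⟨h ▸ hPj, h⟩, And.right⟩

/-- The `r`-th prism map `Δ^{n+1} → Δ^n × I`. -/
noncomputable def prismMap (n : ℕ) (r : Fin (n + 1)) : C(SimplexT (n + 1), SimplexT n × I) where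
  toFun x :=
    (⟨fun j => ∑ i ∈ Finset.univ.filter (fun i => r.predAbove i = j), x.1 i,
      ⟨fun j => Finset.sum_nonneg fun i _ => x.2.1 i, by
        rw [Finset.sum_fiberwise]; exact x.2.2⟩⟩,
     ⟨∑ i ∈ Finset.univ.filter (fun i : Fin (n + 2) => (r : ℕ) < (i : ℕ)), x.1 i,
      ⟨Finset.sum_nonneg fun i _ => x.2.1 i, by
        calc (∑ i ∈ Finset.univ.filter (fun i : Fin (n + 2) => (r : ℕ) < (i : ℕ)), x.1 i)
            ≤ ∑ i, x.1 i :=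
              Finset.sum_le_sum_of_subset_of_nonneg (Finset.filter_subset _ _)
                (fun i _ _ => x.2.1 i)
          _ = 1 := x.2.2⟩⟩)
  continuous_toFun := by
    apply Continuous.prodMk
    · apply Continuous.subtype_mk
      exact continuous_pi fun j =>
        continuous_finset_sum _ fun i _ => (continuous_apply i).comp continuous_subtype_val
    · apply Continuous.subtype_mk
      exact continuous_finset_sum _ fun i _ => (continuous_apply i).comp continuous_subtype_val

lemma prism_face_fst (n : ℕ) (r : Fin (n + 1)) (s : Fin (n + 2)) (x : SimplexT n)
    (j : Fin (n + 1)) :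
    ((prismMap n r ((faceCM n s) x)).1).1 j
      = ∑ k ∈ Finset.univ.filter (fun k => r.predAbove (s.succAbove k) = j), x.1 k := by
  show (∑ i ∈ Finset.univ.filter (fun i => r.predAbove i = j),
      ∑ k ∈ Finset.univ.filter (fun k => s.succAbove k = i), x.1 k) = _
  exact sum_fiber_comp (fun k => s.succAbove k) (fun i => r.predAbove i = j) x.1

lemma prism_face_snd (n : ℕ) (r : Fin (n + 1)) (s : Fin (n + 2)) (x : SimplexT n) :
    (((prismMap n r ((faceCM n s) x)).2 : ℝ))
      = ∑ k ∈ Finset.univ.filter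
          (fun k => (r : ℕ) < ((s.succAbove k : Fin (n + 2)) : ℕ)), x.1 k := by
  show (∑ i ∈ Finset.univ.filter (fun i : Fin (n + 2) => (r : ℕ) < (i : ℕ)),
      ∑ k ∈ Finset.univ.filter (fun k => s.succAbove k = i), x.1 k) = _
  exact sum_fiber_comp (fun k => s.succAbove k) (fun i : Fin (n + 2) => (r : ℕ) < (i : ℕ)) x.1

lemma face_prism_fst (m : ℕ) (s' : Fin (m + 2)) (r' : Fin (m + 1)) (x : SimplexT (m + 1))
    (j : Fin (m + 2)) :
    ((((faceCM m s').prodMap (ContinuousMap.id I)) ((prismMap m r') x)).1).1 j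
      = ∑ k ∈ Finset.univ.filter (fun k => s'.succAbove (r'.predAbove k) = j), x.1 k := by
  show (∑ i ∈ Finset.univ.filter (fun i => s'.succAbove i = j),
      ∑ k ∈ Finset.univ.filter (fun k => r'.predAbove k = i), x.1 k) = _
  exact sum_fiber_comp (fun k => r'.predAbove k) (fun i => s'.succAbove i = j) x.1

lemma face_prism_snd (m : ℕ) (s' : Fin (m + 2)) (r' : Fin (m + 1)) (x : SimplexT (m + 1)) :
    (((((faceCM m s').prodMap (ContinuousMap.id I)) ((prismMap m r') x)).2 : ℝ))
      = ∑ k ∈ Finset.univ.filter (fun k : Fin (m + 2) => (r' : ℕ) < (k : ℕ)), x.1 k := rfl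

/-- Insertion `Δ^n → Δ^n × I` at height `t`. -/
noncomputable def insC (n : ℕ) (t : I) : C(SimplexT n, SimplexT n × I) :=
  ⟨fun x => (x, t), (continuous_id.prodMk continuous_const)⟩

lemma filter_sum_eq {a : ℕ} {b : Type*} [Fintype b] [DecidableEq b]
    (φ ψ : Fin a → b) (h : ∀ k, φ k = ψ k) (x : Fin a → ℝ) (j : b) :
    (∑ k ∈ Finset.univ.filter (fun k => φ k = j), x k)
      = ∑ k ∈ Finset.univ.filter (fun k => ψ k = j), x k := by
  have : φ = ψ := funext h
  subst this; rfl

lemma claimA {q : ℕ} (r : Fin (q + 2)) (s : Fin (q + 3)) (r' : Fin (q + 1)) (s' : Fin (q + 2))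
    (hs : (s : ℕ) = (s' : ℕ)) (hr : (r : ℕ) = (r' : ℕ) + 1) (hle : (s' : ℕ) ≤ (r' : ℕ)) :
    (prismMap (q + 1) r).comp (faceCM (q + 1) s)
      = ((faceCM q s').prodMap (ContinuousMap.id I)).comp (prismMap q r') := by
  ext x : 1
  refine Prod.ext (Subtype.ext (funext fun j => ?_)) (Subtype.ext ?_)
  · simp only [ContinuousMap.comp_apply]
    rw [prism_face_fst, face_prism_fst]
    refine filter_sum_eq _ _ (fun k => ?_) x.1 j
    rw [Fin.ext_iff, predAbove_val, succAbove_val, succAbove_val, predAbove_val]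
    have h1 := k.isLt
    split_ifs <;> omega
  · simp only [ContinuousMap.comp_apply]
    rw [prism_face_snd, face_prism_snd]
    refine Finset.sum_congr (Finset.filter_congr fun k _ => ?_) fun _ _ => rfl
    rw [succAbove_val]
    have h1 := k.isLt
    split_ifs <;> omega

lemma claimB {q : ℕ} (r : Fin (q + 2)) (s : Fin (q + 3)) (r' : Fin (q + 1)) (s' : Fin (q + 2))
    (hs : (s : ℕ) = (s' : ℕ) + 1) (hr : (r : ℕ) = (r' : ℕ)) (hlt : (r' : ℕ) < (s' : ℕ)) :
    (prismMap (q + 1) r).comp (faceCM (q + 1) s)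
      = ((faceCM q s').prodMap (ContinuousMap.id I)).comp (prismMap q r') := by
  ext x : 1
  refine Prod.ext (Subtype.ext (funext fun j => ?_)) (Subtype.ext ?_)
  · simp only [ContinuousMap.comp_apply]
    rw [prism_face_fst, face_prism_fst]
    refine filter_sum_eq _ _ (fun k => ?_) x.1 j
    rw [Fin.ext_iff, predAbove_val, succAbove_val, succAbove_val, predAbove_val]
    have h1 := k.isLt
    split_ifs <;> omega
  · simp only [ContinuousMap.comp_apply]
    rw [prism_face_snd, face_prism_snd]
    refine Finset.sum_congr (Finset.filter_congr fun k _ => ?_) fun _ _ => rfl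
    rw [succAbove_val]
    have h1 := k.isLt
    split_ifs <;> omega

lemma claimC {q : ℕ} (r r₂ : Fin (q + 2)) (s : Fin (q + 3))
    (h2 : (r₂ : ℕ) = (r : ℕ) + 1) (hs : (s : ℕ) = (r : ℕ) + 1) :
    (prismMap (q + 1) r).comp (faceCM (q + 1) s)
      = (prismMap (q + 1) r₂).comp (faceCM (q + 1) s) := by
  ext x : 1
  refine Prod.ext (Subtype.ext (funext fun j => ?_)) (Subtype.ext ?_)
  · simp only [ContinuousMap.comp_apply]
    rw [prism_face_fst, prism_face_fst]
    refine filter_sum_eq _ _ (fun k => ?_) x.1 j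
    rw [Fin.ext_iff, predAbove_val, predAbove_val, succAbove_val]
    have h1 := k.isLt
    split_ifs <;> omega
  · simp only [ContinuousMap.comp_apply]
    rw [prism_face_snd, prism_face_snd]
    refine Finset.sum_congr (Finset.filter_congr fun k _ => ?_) fun _ _ => rfl
    rw [succAbove_val]
    have h1 := k.isLt
    split_ifs <;> omega

lemma claimD {n : ℕ} (r : Fin (n + 1)) (s : Fin (n + 2))
    (hr : (r : ℕ) = 0) (hs : (s : ℕ) = 0) :
    (prismMap n r).comp (faceCM n s) = insC n 1 := by
  ext x : 1
  refine Prod.ext (Subtype.ext (funext fun j => ?_)) (Subtype.ext ?_)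
  · simp only [ContinuousMap.comp_apply, insC]
    rw [prism_face_fst]
    rw [filter_sum_eq (fun k => r.predAbove (s.succAbove k)) (fun k => k)
      (fun k => by
        rw [Fin.ext_iff, predAbove_val, succAbove_val]
        have h1 := k.isLt
        split_ifs <;> omega) x.1 j]
    rw [Finset.filter_eq' Finset.univ j, if_pos (Finset.mem_univ j), Finset.sum_singleton]
    rfl
  · simp only [ContinuousMap.comp_apply, insC]
    show ((prismMap n r ((faceCM n s) x)).2 : ℝ) = ((1 : I) : ℝ)
    rw [prism_face_snd]
    have : Finset.univ.filter
        (fun k : Fin (n+1) => (r : ℕ) < ((s.succAbove k : Fin (n + 2)) : ℕ)) = Finset.univ := by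
      refine Finset.filter_true_of_mem fun k _ => ?_
      rw [succAbove_val]
      have h1 := k.isLt
      split_ifs <;> omega
    rw [this, x.2.2]
    simp

lemma claimE {n : ℕ} (r : Fin (n + 1)) (s : Fin (n + 2))
    (hr : (r : ℕ) = n) (hs : (s : ℕ) = n + 1) :
    (prismMap n r).comp (faceCM n s) = insC n 0 := by
  ext x : 1
  refine Prod.ext (Subtype.ext (funext fun j => ?_)) (Subtype.ext ?_)
  · simp only [ContinuousMap.comp_apply, insC]
    rw [prism_face_fst]
    rw [filter_sum_eq (fun k => r.predAbove (s.succAbove k)) (fun k => k)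
      (fun k => by
        rw [Fin.ext_iff, predAbove_val, succAbove_val]
        have h1 := k.isLt
        split_ifs <;> omega) x.1 j]
    rw [Finset.filter_eq' Finset.univ j, if_pos (Finset.mem_univ j), Finset.sum_singleton]
    rfl
  · simp only [ContinuousMap.comp_apply, insC]
    show ((prismMap n r ((faceCM n s) x)).2 : ℝ) = ((0 : I) : ℝ)
    rw [prism_face_snd]
    have : Finset.univ.filter
        (fun k : Fin (n+1) => (r : ℕ) < ((s.succAbove k : Fin (n + 2)) : ℕ)) = ∅ := by
      refine Finset.filter_false_of_mem fun k _ => ?_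
      rw [succAbove_val]
      have h1 := k.isLt
      split_ifs <;> omega
    rw [this, Finset.sum_empty]
    simp

section ChainLayer

lemma add_shuffle1 {M : Type*} [AddCommGroup M] (a s1 s2 b : M) (h : s1 + s2 = 0) :
    (a + s1) + (s2 + b) = a + b := by
  have e : (a + s1) + (s2 + b) = (a + b) + (s1 + s2) := by abel
  rw [e, h, add_zero]

lemma add_shuffle2 {M : Type*} [AddCommGroup M] (a b c d : M) :
    (a + (b + c)) + d = (a + b) + (c + d) := by abel

lemma pow_neg_one_succ_add {R : Type} [CommRing R] (a b : ℕ) (h : a = b + 1) :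
    ((-1 : R)) ^ a = -((-1 : R)) ^ b := by
  rw [h, pow_succ]; ring

lemma neg_one_pow_add_eq_zero {R : Type} [CommRing R] (a b : ℕ) (h : a = b + 1) :
    ((-1 : R)) ^ a + ((-1 : R)) ^ b = 0 := by
  rw [h, pow_succ]; ring

variable {Z : Type u} {W : Type v} [TopologicalSpace Z] [TopologicalSpace W]

/-- Ungraded singular chains with coefficients in `R`. -/
abbrev SCh (R : Type) [CommRing R] (Z : Type u) [TopologicalSpace Z] : Type _ := SST Z →₀ R

/-- Boundary of a basis singular simplex. -/
noncomputable def dBasis : SST Z → SCh R Z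
  | ⟨0, _⟩ => 0
  | ⟨q + 1, f⟩ =>
    ∑ r : Fin (q + 2), Finsupp.single ⟨q, f.comp (faceCM q r)⟩ ((-1 : R) ^ (r : ℕ))

/-- The singular boundary operator (ungraded). -/
noncomputable def dS : SCh R Z →ₗ[R] SCh R Z :=
  Finsupp.lift _ R _ (dBasis R)

lemma dS_single (sig : SST Z) (c : R) : dS R (Finsupp.single sig c) = c • dBasis R sig := by
  simp [dS, Finsupp.lift_apply, Finsupp.sum_single_index]

/-- The prism operator on a basis simplex, for a homotopy `K : C(Z × I, W)`. -/
noncomputable def pBasis (K : C(Z × I, W)) (sig : SST Z) : SCh R W :=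
  ∑ r : Fin (sig.1 + 1),
    Finsupp.single
      ⟨sig.1 + 1, (K.comp (sig.2.prodMap (ContinuousMap.id I))).comp (prismMap sig.1 r)⟩
      ((-1 : R) ^ (r : ℕ))

/-- The prism operator (ungraded). -/
noncomputable def PK (K : C(Z × I, W)) : SCh R Z →ₗ[R] SCh R W :=
  Finsupp.lift _ R _ (pBasis R K)

lemma PK_single (K : C(Z × I, W)) (sig : SST Z) (c : R) :
    PK R K (Finsupp.single sig c) = c • pBasis R K sig := by
  simp [PK, Finsupp.lift_apply, Finsupp.sum_single_index]

/-- The end of the prism at height `t`. -/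
noncomputable def endB (K : C(Z × I, W)) (t : I) (sig : SST Z) : SST W :=
  ⟨sig.1, (K.comp (sig.2.prodMap (ContinuousMap.id I))).comp (insC sig.1 t)⟩

lemma prodMap_comp {α β γ : Type*} [TopologicalSpace α] [TopologicalSpace β]
    [TopologicalSpace γ] (f : C(α, β)) (g : C(γ, α)) :
    ((f.comp g).prodMap (ContinuousMap.id I))
      = (f.prodMap (ContinuousMap.id I)).comp (g.prodMap (ContinuousMap.id I)) :=
  rfl

/-- `T`-terms: faces of prisms. -/
noncomputable def Tt (q : ℕ) (F : C(SimplexT (q + 1) × I, W)) (r : Fin (q + 2))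
    (s : Fin (q + 3)) : SCh R W :=
  Finsupp.single ⟨q + 1, F.comp ((prismMap (q + 1) r).comp (faceCM (q + 1) s))⟩
    ((-1 : R) ^ ((r : ℕ) + (s : ℕ)))

/-- `U`-terms: prisms of faces. -/
noncomputable def Ut (q : ℕ) (F : C(SimplexT (q + 1) × I, W)) (s : Fin (q + 2))
    (r' : Fin (q + 1)) : SCh R W :=
  Finsupp.single ⟨q + 1, F.comp (((faceCM q s).prodMap (ContinuousMap.id I)).comp (prismMap q r'))⟩
    ((-1 : R) ^ ((s : ℕ) + (r' : ℕ)))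


/-- Reindexing bijection for the off-diagonal cancellation. -/
def phiF (q : ℕ) (p : Fin (q + 2) × Fin (q + 1)) : Fin (q + 2) × Fin (q + 1) :=
  if h : (p.2 : ℕ) < (p.1 : ℕ) then
    (⟨(p.2 : ℕ), by have h2 := p.2.isLt; omega⟩, ⟨(p.1 : ℕ) - 1, by have h1 := p.1.isLt; omega⟩)
  else
    (⟨(p.2 : ℕ) + 1, by have h2 := p.2.isLt; omega⟩, ⟨(p.1 : ℕ), by have h2 := p.2.isLt; omega⟩)

/-- Inverse reindexing bijection. -/
def psiF (q : ℕ) (p : Fin (q + 2) × Fin (q + 1)) : Fin (q + 2) × Fin (q + 1) :=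
  if h : (p.1 : ℕ) ≤ (p.2 : ℕ) then
    (⟨(p.2 : ℕ) + 1, by have h2 := p.2.isLt; omega⟩, ⟨(p.1 : ℕ), by have h2 := p.2.isLt; omega⟩)
  else
    (⟨(p.2 : ℕ), by have h2 := p.2.isLt; omega⟩, ⟨(p.1 : ℕ) - 1, by have h1 := p.1.isLt; omega⟩)

lemma phiF_val (q : ℕ) (p : Fin (q + 2) × Fin (q + 1)) :
    (((phiF q p).1 : ℕ) = if (p.2 : ℕ) < (p.1 : ℕ) then (p.2 : ℕ) else (p.2 : ℕ) + 1)
      ∧ (((phiF q p).2 : ℕ) = if (p.2 : ℕ) < (p.1 : ℕ) then (p.1 : ℕ) - 1 else (p.1 : ℕ)) := by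
  rw [phiF]; split_ifs <;> exact ⟨rfl, rfl⟩

lemma psiF_val (q : ℕ) (p : Fin (q + 2) × Fin (q + 1)) :
    (((psiF q p).1 : ℕ) = if (p.1 : ℕ) ≤ (p.2 : ℕ) then (p.2 : ℕ) + 1 else (p.2 : ℕ))
      ∧ (((psiF q p).2 : ℕ) = if (p.1 : ℕ) ≤ (p.2 : ℕ) then (p.1 : ℕ) else (p.1 : ℕ) - 1) := by
  rw [psiF]; split_ifs <;> exact ⟨rfl, rfl⟩

/-- The prism chain homotopy identity on basis elements. -/
lemma prism_identity (K : C(Z × I, W)) (sig : SST Z) :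
    dS R (pBasis R K sig) + PK R K (dBasis R sig)
      = Finsupp.single (endB K 1 sig) 1 - Finsupp.single (endB K 0 sig) 1 := by
  obtain ⟨q, f⟩ := sig
  cases q with
  | zero =>
    have hd : dBasis R (⟨0, f⟩ : SST Z) = 0 := rfl
    rw [hd, map_zero, add_zero]
    have hp : pBasis R K (⟨0, f⟩ : SST Z)
        = Finsupp.single
            ⟨1, (K.comp (f.prodMap (ContinuousMap.id I))).comp (prismMap 0 0)⟩ (1 : R) := by
      rw [pBasis, Fin.sum_univ_one]
      norm_num
    rw [hp, dS_single, one_smul]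
    have hd2 : dBasis R
          (⟨1, (K.comp (f.prodMap (ContinuousMap.id I))).comp (prismMap 0 0)⟩ : SST W)
        = ∑ r : Fin 2, Finsupp.single
            ⟨0, ((K.comp (f.prodMap (ContinuousMap.id I))).comp (prismMap 0 0)).comp
              (faceCM 0 r)⟩ ((-1 : R) ^ (r : ℕ)) := rfl
    rw [hd2, Fin.sum_univ_two]
    simp only [ContinuousMap.comp_assoc]
    rw [claimD (0 : Fin 1) (0 : Fin 2) rfl rfl, claimE (0 : Fin 1) (1 : Fin 2) rfl rfl]
    simp [endB, sub_eq_add_neg, ← Finsupp.single_neg, ContinuousMap.comp_assoc]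
  | succ q =>
    have h1 : dS R (pBasis R K (⟨q + 1, f⟩ : SST Z))
        = ∑ r : Fin (q + 2), ∑ s : Fin (q + 3),
            Tt R q (K.comp (f.prodMap (ContinuousMap.id I))) r s := by
      rw [pBasis, map_sum]
      refine Finset.sum_congr rfl fun r _ => ?_
      rw [dS_single]
      have hdb : dBasis R
            (⟨q + 1 + 1, (K.comp (f.prodMap (ContinuousMap.id I))).comp
              (prismMap (q + 1) r)⟩ : SST W)
          = ∑ s : Fin (q + 3), Finsupp.single
              ⟨q + 1, ((K.comp (f.prodMap (ContinuousMap.id I))).comp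
                (prismMap (q + 1) r)).comp (faceCM (q + 1) s)⟩ ((-1 : R) ^ (s : ℕ)) := rfl
      rw [hdb, Finset.smul_sum]
      refine Finset.sum_congr rfl fun s _ => ?_
      rw [Finsupp.smul_single, smul_eq_mul, ← pow_add, Tt, ContinuousMap.comp_assoc]
    have h2 : PK R K (dBasis R (⟨q + 1, f⟩ : SST Z))
        = ∑ s : Fin (q + 2), ∑ r' : Fin (q + 1),
            Ut R q (K.comp (f.prodMap (ContinuousMap.id I))) s r' := by
      have hdb : dBasis R (⟨q + 1, f⟩ : SST Z)
          = ∑ s : Fin (q + 2),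
              Finsupp.single (⟨q, f.comp (faceCM q s)⟩ : SST Z) ((-1 : R) ^ (s : ℕ)) := rfl
      rw [hdb, map_sum]
      refine Finset.sum_congr rfl fun s _ => ?_
      rw [PK_single, pBasis, Finset.smul_sum]
      refine Finset.sum_congr rfl fun r' _ => ?_
      rw [Finsupp.smul_single, smul_eq_mul, ← pow_add, Ut, prodMap_comp]
      simp only [ContinuousMap.comp_assoc]
    have h3 : ∀ r : Fin (q + 2),
        (∑ s : Fin (q + 3), Tt R q (K.comp (f.prodMap (ContinuousMap.id I))) r s)
          = Tt R q (K.comp (f.prodMap (ContinuousMap.id I))) r r.castSucc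
            + (Tt R q (K.comp (f.prodMap (ContinuousMap.id I))) r (r.castSucc.succAbove r)
              + ∑ s'' : Fin (q + 1), Tt R q (K.comp (f.prodMap (ContinuousMap.id I))) r
                  (r.castSucc.succAbove (r.succAbove s''))) := by
      intro r
      rw [Fin.sum_univ_succAbove
        (fun s => Tt R q (K.comp (f.prodMap (ContinuousMap.id I))) r s) r.castSucc]
      congr 1
      rw [Fin.sum_univ_succAbove
        (fun s' => Tt R q (K.comp (f.prodMap (ContinuousMap.id I))) r
          (r.castSucc.succAbove s')) r]
    have hcancel : ∀ t : Fin (q + 1),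
        Tt R q (K.comp (f.prodMap (ContinuousMap.id I))) t.succ (t.succ.castSucc)
          + Tt R q (K.comp (f.prodMap (ContinuousMap.id I))) t.castSucc
              ((t.castSucc).castSucc.succAbove t.castSucc) = 0 := by
      intro t
      have hs12 : (t.castSucc).castSucc.succAbove t.castSucc = t.succ.castSucc := by
        rw [Fin.ext_iff, succAbove_val]
        simp
      rw [hs12, Tt, Tt,
        claimC t.castSucc t.succ t.succ.castSucc (by simp) (by simp), ← Finsupp.single_add,
        pow_neg_one_succ_add ((t.succ : ℕ) + (t.succ.castSucc : ℕ))
          ((t.castSucc : ℕ) + (t.succ.castSucc : ℕ)) (by simp [Fin.val_succ]; omega),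
        Finsupp.single_eq_zero]
      ring
    have hfirst : Tt R q (K.comp (f.prodMap (ContinuousMap.id I))) 0 ((0 : Fin (q+2)).castSucc)
        = Finsupp.single (endB K 1 (⟨q + 1, f⟩ : SST Z)) 1 := by
      rw [Tt, claimD (0 : Fin (q + 2)) ((0 : Fin (q+2)).castSucc) (by simp) (by simp)]
      norm_num [endB]
    have hlast : Tt R q (K.comp (f.prodMap (ContinuousMap.id I))) (Fin.last (q + 1))
          ((Fin.last (q + 1)).castSucc.succAbove (Fin.last (q + 1)))
        = -Finsupp.single (endB K 0 (⟨q + 1, f⟩ : SST Z)) 1 := by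
      have hsv : (((Fin.last (q + 1)).castSucc.succAbove (Fin.last (q + 1))) : ℕ) = q + 2 := by
        rw [succAbove_val]; simp
      rw [Tt, claimE (Fin.last (q + 1)) _ (by simp) hsv, ← Finsupp.single_neg]
      congr 1
      rw [pow_neg_one_succ_add _ (((Fin.last (q+1)) : ℕ) + ((Fin.last (q+1)) : ℕ))
          (by rw [hsv]; simp; omega)]
      have hev : Even (((Fin.last (q+1)) : ℕ) + ((Fin.last (q+1)) : ℕ)) := ⟨_, rfl⟩
      rw [hev.neg_one_pow]
    have hmid : (∑ t : Fin (q + 1),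
          Tt R q (K.comp (f.prodMap (ContinuousMap.id I))) t.succ (t.succ.castSucc))
        + (∑ t : Fin (q + 1),
          Tt R q (K.comp (f.prodMap (ContinuousMap.id I))) t.castSucc
            ((t.castSucc).castSucc.succAbove t.castSucc)) = 0 := by
      rw [← Finset.sum_add_distrib]
      exact Finset.sum_eq_zero fun t _ => hcancel t
    have hdiag :
        (∑ r : Fin (q + 2), Tt R q (K.comp (f.prodMap (ContinuousMap.id I))) r r.castSucc)
          + (∑ r : Fin (q + 2), Tt R q (K.comp (f.prodMap (ContinuousMap.id I))) r
              (r.castSucc.succAbove r))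
        = Finsupp.single (endB K 1 (⟨q + 1, f⟩ : SST Z)) 1
            - Finsupp.single (endB K 0 (⟨q + 1, f⟩ : SST Z)) 1 := by
      rw [Fin.sum_univ_succ
        (fun r : Fin (q + 2) => Tt R q (K.comp (f.prodMap (ContinuousMap.id I))) r r.castSucc)]
      rw [Fin.sum_univ_castSucc
        (fun r : Fin (q + 2) => Tt R q (K.comp (f.prodMap (ContinuousMap.id I))) r
          (r.castSucc.succAbove r))]
      rw [hfirst, hlast, sub_eq_add_neg]
      exact add_shuffle1 _ _ _ _ hmid
    have hoff : (∑ r : Fin (q + 2), ∑ s'' : Fin (q + 1),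
          Tt R q (K.comp (f.prodMap (ContinuousMap.id I))) r
            (r.castSucc.succAbove (r.succAbove s'')))
        + (∑ s : Fin (q + 2), ∑ r' : Fin (q + 1),
            Ut R q (K.comp (f.prodMap (ContinuousMap.id I))) s r') = 0 := by
      rw [← Finset.sum_product', ← Finset.sum_product']
      have key : (∑ p ∈ (Finset.univ ×ˢ Finset.univ : Finset (Fin (q+2) × Fin (q+1))),
            Tt R q (K.comp (f.prodMap (ContinuousMap.id I))) p.1
              (p.1.castSucc.succAbove (p.1.succAbove p.2)))
          = ∑ p ∈ (Finset.univ ×ˢ Finset.univ : Finset (Fin (q+2) × Fin (q+1))),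
              -(Ut R q (K.comp (f.prodMap (ContinuousMap.id I))) p.1 p.2) := by
        refine Finset.sum_nbij' (i := phiF q) (j := psiF q)
          (fun _ _ => Finset.mem_product.2 ⟨Finset.mem_univ _, Finset.mem_univ _⟩)
          (fun _ _ => Finset.mem_product.2 ⟨Finset.mem_univ _, Finset.mem_univ _⟩)
          ?_ ?_ ?_
        · rintro ⟨r, s''⟩ -
          obtain ⟨e1, e2⟩ := phiF_val q (r, s'')
          obtain ⟨e3, e4⟩ := psiF_val q (phiF q (r, s''))
          have h1 := r.isLt; have h2 := s''.isLt
          refine Prod.ext (Fin.ext ?_) (Fin.ext ?_)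
          · rw [e3, e1, e2]; dsimp only; split_ifs <;> omega
          · rw [e4, e1, e2]; dsimp only; split_ifs <;> omega
        · rintro ⟨s', r'⟩ -
          obtain ⟨e1, e2⟩ := psiF_val q (s', r')
          obtain ⟨e3, e4⟩ := phiF_val q (psiF q (s', r'))
          have h1 := s'.isLt; have h2 := r'.isLt
          refine Prod.ext (Fin.ext ?_) (Fin.ext ?_)
          · rw [e3, e1, e2]; dsimp only; split_ifs <;> omega
          · rw [e4, e1, e2]; dsimp only; split_ifs <;> omega
        · rintro ⟨r, s''⟩ -
          by_cases h : (s'' : ℕ) < (r : ℕ)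
          · have hphi : phiF q (r, s'')
                = (⟨(s'' : ℕ), by have := s''.isLt; omega⟩,
                   ⟨(r : ℕ) - 1, by have := r.isLt; omega⟩) := by
              rw [phiF, dif_pos h]
            have hsv : ((r.castSucc.succAbove (r.succAbove s'')) : ℕ) = (s'' : ℕ) := by
              rw [succAbove_val, succAbove_val]
              simp only [Fin.coe_castSucc]
              split_ifs <;> omega
            rw [hphi]
            dsimp only
            rw [Tt, Ut, claimA r (r.castSucc.succAbove (r.succAbove s''))
              ⟨(r : ℕ) - 1, by have := r.isLt; omega⟩
              ⟨(s'' : ℕ), by have := s''.isLt; omega⟩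
              (hsv.trans rfl) (show (r : ℕ) = ((r : ℕ) - 1) + 1 by omega)
              (show (s'' : ℕ) ≤ (r : ℕ) - 1 by omega),
              ← Finsupp.single_neg]
            congr 1
            show ((-1 : R)) ^ ((r : ℕ) + ((r.castSucc.succAbove (r.succAbove s'')) : ℕ))
                = -((-1 : R)) ^ ((s'' : ℕ) + ((r : ℕ) - 1))
            rw [hsv]
            exact pow_neg_one_succ_add _ _ (by omega)
          · have hphi : phiF q (r, s'')
                = (⟨(s'' : ℕ) + 1, by have := s''.isLt; omega⟩,
                   ⟨(r : ℕ), by have := s''.isLt; omega⟩) := by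
              rw [phiF, dif_neg h]
            have hsv : ((r.castSucc.succAbove (r.succAbove s'')) : ℕ) = (s'' : ℕ) + 2 := by
              rw [succAbove_val, succAbove_val]
              simp only [Fin.coe_castSucc]
              split_ifs <;> omega
            rw [hphi]
            dsimp only
            rw [Tt, Ut, claimB r (r.castSucc.succAbove (r.succAbove s''))
              ⟨(r : ℕ), by have := s''.isLt; omega⟩
              ⟨(s'' : ℕ) + 1, by have := s''.isLt; omega⟩
              (hsv.trans rfl) rfl
              (show (r : ℕ) < (s'' : ℕ) + 1 by omega),
              ← Finsupp.single_neg]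
            congr 1
            show ((-1 : R)) ^ ((r : ℕ) + ((r.castSucc.succAbove (r.succAbove s'')) : ℕ))
                = -((-1 : R)) ^ (((s'' : ℕ) + 1) + (r : ℕ))
            rw [hsv]
            exact pow_neg_one_succ_add _ _ (by omega)
      rw [key, Finset.sum_neg_distrib, neg_add_cancel]
    have e : (∑ r : Fin (q + 2), ∑ s : Fin (q + 3),
          Tt R q (K.comp (f.prodMap (ContinuousMap.id I))) r s)
        = (∑ r : Fin (q + 2), Tt R q (K.comp (f.prodMap (ContinuousMap.id I))) r r.castSucc)
          + ((∑ r : Fin (q + 2), Tt R q (K.comp (f.prodMap (ContinuousMap.id I))) r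
                (r.castSucc.succAbove r))
            + ∑ r : Fin (q + 2), ∑ s'' : Fin (q + 1),
                Tt R q (K.comp (f.prodMap (ContinuousMap.id I))) r
                  (r.castSucc.succAbove (r.succAbove s''))) := by
      rw [← Finset.sum_add_distrib, ← Finset.sum_add_distrib]
      exact Finset.sum_congr rfl fun r _ => h3 r
    rw [h1, h2, e, add_shuffle2, hdiag, hoff, add_zero]

end ChainLayer

section Assembly

open Finset

variable {A : InterSp.{u} n} {B : InterSp.{v} n}

/-- Ungraded tuple chains. -/
abbrev UCh (A : InterSp.{u} n) : Type _ := TupF A →₀ R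

/-- Koszul sign exponent at slot `i`. -/
def eps (t : TupF A) (i : Fin n) : ℕ :=
  ∑ k ∈ Finset.univ.filter (fun k : Fin n => (k : ℕ) < (i : ℕ)), (t k).1

/-- Insertion of a chain at slot `i`. -/
noncomputable def slotIns (t : TupF A) (i : Fin n) : SCh R ↥(A.C i) →ₗ[R] UCh R A :=
  Finsupp.lift _ R _ fun u => Finsupp.single (Function.update t i u) (1 : R)

lemma slotIns_single (t : TupF A) (i : Fin n) (u : SST ↥(A.C i)) (c : R) :
    slotIns R t i (Finsupp.single u c) = Finsupp.single (Function.update t i u) c := by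
  simp [slotIns, Finsupp.lift_apply, Finsupp.sum_single_index, Finsupp.smul_single]
  exact Finsupp.smul_single_one _ _

lemma slotIns_update_self (t : TupF A) (i : Fin n) (u : SST ↥(A.C i)) :
    slotIns R (Function.update t i u) i = slotIns R t i := by
  unfold slotIns
  congr 1
  funext v
  erw [Function.update_idem]

lemma slotIns_congr {t t' : TupF A} (i : Fin n) (h : ∀ k, k ≠ i → t k = t' k) :
    slotIns R t i = slotIns R t' i := by
  unfold slotIns
  congr 1
  funext v
  have : Function.update t i v = Function.update t' i v := by
    funext k
    rcases eq_or_ne k i with rfl | hk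
    · erw [Function.update_self, Function.update_self]
    · erw [Function.update_of_ne hk, Function.update_of_ne hk, h k hk]
  rw [this]

lemma eps_update_ge {t : TupF A} {i j : Fin n} (u : SST ↥(A.C j)) (hle : (i : ℕ) ≤ (j : ℕ)) :
    eps (Function.update t j u) i = eps t i := by
  unfold eps
  refine Finset.sum_congr rfl fun k hk => ?_
  have hk' := (Finset.mem_filter.1 hk).2
  have : k ≠ j := by
    intro hkj
    subst hkj
    omega
  erw [Function.update_of_ne this]

lemma eps_update_lt {t : TupF A} {i j : Fin n} (u : SST ↥(A.C j)) (hlt : (j : ℕ) < (i : ℕ)) :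
    eps (Function.update t j u) i + (t j).1 = eps t i + u.1 := by
  unfold eps
  have hmem : j ∈ Finset.univ.filter (fun k : Fin n => (k : ℕ) < (i : ℕ)) := by
    simp only [Finset.mem_filter, Finset.mem_univ, true_and]
    exact hlt
  have e1 : (fun k => ((Function.update t j u) k).1)
      = Function.update (fun k => (t k).1) j u.1 := by
    funext k
    rcases eq_or_ne k j with rfl | hk
    · erw [Function.update_self, Function.update_self]
    · erw [Function.update_of_ne hk, Function.update_of_ne hk]
  rw [Finset.sum_congr rfl fun k _ => congrFun e1 k, Finset.sum_update_of_mem hmem,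
    Finset.sum_eq_sum_sdiff_singleton_add hmem (fun k => (t k).1)]
  omega

/-- Mixed morphism entry. -/
noncomputable def morEnt (f g : InterSp.Mor A B) (c : ℕ) (j : Fin n) (u : SST ↥(A.C j)) :
    SST ↥(B.C j) :=
  if (j : ℕ) < c then ⟨u.1, (f.f j).comp u.2⟩ else ⟨u.1, (g.f j).comp u.2⟩

lemma morEnt_fst (f g : InterSp.Mor A B) (c : ℕ) (j : Fin n) (u : SST ↥(A.C j)) :
    (morEnt f g c j u).1 = u.1 := by
  unfold morEnt; split_ifs <;> rfl

/-- Mixed tuple: `f` below `c`, `g` from `c` on. -/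
noncomputable def mixT (f g : InterSp.Mor A B) (c : ℕ) (t : TupF A) : TupF B :=
  fun k => morEnt f g c k (t k)

lemma mixT_fst (f g : InterSp.Mor A B) (c : ℕ) (t : TupF A) (k : Fin n) :
    ((mixT f g c t) k).1 = (t k).1 :=
  morEnt_fst f g c k (t k)

lemma mixT_update (f g : InterSp.Mor A B) (c : ℕ) (t : TupF A) (j : Fin n)
    (u : SST ↥(A.C j)) :
    mixT f g c (Function.update t j u)
      = Function.update (mixT f g c t) j (morEnt f g c j u) := by
  funext k
  rcases eq_or_ne k j with rfl | hk
  · simp [mixT]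
    erw [Function.update_self, Function.update_self]
  · simp [mixT, Function.update_of_ne hk]
    erw [Function.update_of_ne hk, Function.update_of_ne hk]
    rfl

lemma eps_mix (f g : InterSp.Mor A B) (c : ℕ) (t : TupF A) (i : Fin n) :
    eps (mixT f g c t) i = eps t i :=
  Finset.sum_congr rfl fun k _ => mixT_fst f g c t k

/-- The boundary operator concentrated at slot `j`. -/
noncomputable def DU (j : Fin n) : UCh R A →ₗ[R] UCh R A :=
  Finsupp.lift _ R _ fun t => ((-1 : R) ^ eps t j) • slotIns R t j (dBasis R (t j))

lemma DU_single (j : Fin n) (t : TupF A) (c : R) :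
    DU R j (Finsupp.single t c)
      = (c * (-1 : R) ^ eps t j) • slotIns R t j (dBasis R (t j)) := by
  simp [DU, Finsupp.lift_apply, Finsupp.sum_single_index, smul_smul]

lemma dBasis_of_dim_zero {Z : Type u} [TopologicalSpace Z] (sig : SST Z) (h : sig.1 = 0) :
    dBasis R sig = 0 := by
  obtain ⟨d, s2⟩ := sig
  cases d with
  | zero => rfl
  | succ d => simp at h

/-- Prism entry at slot `i`. -/
noncomputable def prismEnt {f g : InterSp.Mor A B} (h : InterSp.FHtpy f g) (i : Fin n)
    (t : TupF A) (r : Fin ((t i).1 + 1)) : SST ↥(B.C i) :=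
  ⟨(t i).1 + 1, ((h.H i).comp ((t i).2.prodMap (ContinuousMap.id I))).comp
    (prismMap (t i).1 r)⟩

/-- The prism operator concentrated at slot `i`. -/
noncomputable def pSlot (f g : InterSp.Mor A B) (h : InterSp.FHtpy f g) (i : Fin n) :
    UCh R A →ₗ[R] UCh R B :=
  Finsupp.lift _ R _ fun t =>
    ((-1 : R) ^ eps t i) • slotIns R (mixT f g (i : ℕ) t) i (pBasis R (h.H i) (t i))

lemma pSlot_single (f g : InterSp.Mor A B) (h : InterSp.FHtpy f g) (i : Fin n)
    (t : TupF A) (c : R) :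
    pSlot R f g h i (Finsupp.single t c)
      = (c * (-1 : R) ^ eps t i) •
          slotIns R (mixT f g (i : ℕ) t) i (pBasis R (h.H i) (t i)) := by
  simp [pSlot, Finsupp.lift_apply, Finsupp.sum_single_index, smul_smul]

lemma neg_one_pow_cancel (a b : ℕ) : ((-1 : R)) ^ (a + b) * (-1 : R) ^ a = (-1 : R) ^ b := by
  rw [← pow_add, show a + b + a = b + 2 * a by omega, pow_add, pow_mul]
  norm_num

lemma pSlot_single_eval (f g : InterSp.Mor A B) (h : InterSp.FHtpy f g) (i : Fin n)
    (t : TupF A) (c : R) :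
    pSlot R f g h i (Finsupp.single t c)
      = ∑ r : Fin ((t i).1 + 1),
          Finsupp.single (Function.update (mixT f g (i : ℕ) t) i (prismEnt h i t r))
            (c * (-1 : R) ^ (eps t i + (r : ℕ))) := by
  rw [pSlot_single, pBasis, map_sum, Finset.smul_sum]
  refine Finset.sum_congr rfl fun r _ => ?_
  erw [slotIns_single, Finsupp.smul_single, prismEnt, smul_eq_mul, pow_add, mul_assoc]

lemma DU_slotIns (i : Fin n) (t : TupF A) (z : SCh R ↥(A.C i)) :
    DU R i (slotIns R t i z) = ((-1 : R) ^ eps t i) • slotIns R t i (dS R z) := by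
  induction z using Finsupp.induction_linear with
  | zero => simp
  | add x y hx hy => simp [map_add, hx, hy, smul_add]
  | single u c =>
    erw [slotIns_single, DU_single, Function.update_self,
      eps_update_ge _ (le_refl (i : ℕ)), slotIns_update_self, dS_single, map_smul,
      smul_smul]
    congr 1
    ring

lemma pSlot_slotIns (f g : InterSp.Mor A B) (h : InterSp.FHtpy f g) (i : Fin n)
    (t : TupF A) (z : SCh R ↥(A.C i)) :
    pSlot R f g h i (slotIns R t i z)
      = ((-1 : R) ^ eps t i) • slotIns R (mixT f g (i : ℕ) t) i (PK R (h.H i) z) := by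
  induction z using Finsupp.induction_linear with
  | zero => simp
  | add x y hx hy => simp [map_add, hx, hy, smul_add]
  | single u c =>
    erw [slotIns_single, pSlot_single]
    erw [eps_update_ge _ (le_refl (i : ℕ))]
    erw [Function.update_self]
    rw [PK_single, map_smul]
    erw [mixT_update]
    erw [slotIns_update_self]
    rw [smul_smul]
    congr 1
    ring

lemma mixT_end1 (f g : InterSp.Mor A B) (h : InterSp.FHtpy f g) (i : Fin n) (t : TupF A) :
    Function.update (mixT f g (i : ℕ) t) i (endB (h.H i) 1 (t i)) = mixT f g (i : ℕ) t := by
  have he : endB (h.H i) 1 (t i) = mixT f g (i : ℕ) t i := by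
    show endB (h.H i) 1 (t i) = morEnt f g (i : ℕ) i (t i)
    rw [morEnt, if_neg (lt_irrefl (i : ℕ))]
    unfold endB
    congr 1
    ext x
    exact congrArg Subtype.val (h.h1 i ((t i).2 x))
  erw [he, Function.update_eq_self]

lemma mixT_end0 (f g : InterSp.Mor A B) (h : InterSp.FHtpy f g) (i : Fin n) (t : TupF A) :
    Function.update (mixT f g (i : ℕ) t) i (endB (h.H i) 0 (t i))
      = mixT f g ((i : ℕ) + 1) t := by
  funext k
  rcases eq_or_ne k i with rfl | hk
  · erw [Function.update_self]
    show endB (h.H k) 0 (t k) = morEnt f g ((k : ℕ) + 1) k (t k)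
    rw [morEnt, if_pos (by omega)]
    unfold endB
    congr 1
    ext x
    exact congrArg Subtype.val (h.h0 k ((t k).2 x))
  · erw [Function.update_of_ne hk]
    show morEnt f g (i : ℕ) k (t k) = morEnt f g ((i : ℕ) + 1) k (t k)
    have hki : (k : ℕ) ≠ (i : ℕ) := fun hc => hk (Fin.ext hc)
    unfold morEnt
    rcases Nat.lt_or_ge (k : ℕ) (i : ℕ) with hlt | hge
    · rw [if_pos hlt, if_pos (by omega)]
    · rw [if_neg (by omega), if_neg (by omega)]

/-- The slot-diagonal identity. -/
lemma L1 (f g : InterSp.Mor A B) (h : InterSp.FHtpy f g) (i : Fin n) (t : TupF A) :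
    DU R i (pSlot R f g h i (Finsupp.single t 1))
      + pSlot R f g h i (DU R i (Finsupp.single t 1))
      = Finsupp.single (mixT f g (i : ℕ) t) 1
        - Finsupp.single (mixT f g ((i : ℕ) + 1) t) 1 := by
  have hA : DU R i (pSlot R f g h i (Finsupp.single t 1))
      = slotIns R (mixT f g (i : ℕ) t) i (dS R (pBasis R (h.H i) (t i))) := by
    rw [pSlot_single, map_smul, DU_slotIns, eps_mix, smul_smul, one_mul,
      ← pow_add, Even.neg_one_pow ⟨eps t i, by omega⟩, one_smul]
  have hB : pSlot R f g h i (DU R i (Finsupp.single t 1))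
      = slotIns R (mixT f g (i : ℕ) t) i (PK R (h.H i) (dBasis R (t i))) := by
    rw [DU_single, map_smul, pSlot_slotIns, smul_smul, one_mul,
      ← pow_add, Even.neg_one_pow ⟨eps t i, by omega⟩, one_smul]
  rw [hA, hB, ← map_add, prism_identity, map_sub, slotIns_single, slotIns_single,
    mixT_end1, mixT_end0]
  rfl

/-- The slot anticommutation identity. -/
lemma L2 (f g : InterSp.Mor A B) (h : InterSp.FHtpy f g) {i j : Fin n} (hij : j ≠ i)
    (t : TupF A) :
    DU R j (pSlot R f g h i (Finsupp.single t 1))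
      + pSlot R f g h i (DU R j (Finsupp.single t 1)) = 0 := by
  have hmor : ∀ u : SST ↥(A.C j), morEnt f g (i : ℕ) j u
      = ⟨u.1, ((if (j : ℕ) < (i : ℕ) then f.f j else g.f j).comp u.2 :
          C(SimplexT u.1, ↥(B.C j)))⟩ := by
    intro u; unfold morEnt; split_ifs <;> rfl
  have hupd : ∀ r : Fin ((t i).1 + 1),
      (Function.update (mixT f g (i : ℕ) t) i (prismEnt h i t r)) j
        = morEnt f g (i : ℕ) j (t j) := by
    intro r
    erw [Function.update_of_ne hij]
    rfl
  rcases htj : t j with ⟨dj, sj⟩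
  cases dj with
  | zero =>
    have hz1 : DU R j (pSlot R f g h i (Finsupp.single t 1)) = 0 := by
      rw [pSlot_single_eval]
      refine (map_sum _ _ _).trans ?_
      refine Finset.sum_eq_zero fun r _ => ?_
      erw [DU_single]
      erw [hupd r]
      rw [htj,
        dBasis_of_dim_zero R (morEnt f g (i : ℕ) j ⟨0, sj⟩) (morEnt_fst f g (i : ℕ) j ⟨0, sj⟩),
        map_zero, smul_zero]
    have hz2 : pSlot R f g h i (DU R j (Finsupp.single t 1)) = 0 := by
      rw [DU_single, htj, dBasis_of_dim_zero R (⟨0, sj⟩ : SST ↥(A.C j)) rfl,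
        map_zero, smul_zero, map_zero]
    rw [hz1, hz2, add_zero]
  | succ dj =>
    -- auxiliary: transport of the prism entry along an update at slot `j`
    have hPE : ∀ (u : SST ↥(A.C j)) (x : Fin (((Function.update t j u) i).1 + 1))
        (r : Fin ((t i).1 + 1)), (x : ℕ) = (r : ℕ) →
        prismEnt h i (Function.update t j u) x = prismEnt h i t r := by
      intro u
      unfold prismEnt
      rw [Function.update_of_ne (Ne.symm hij) u t]
      intro x r hxr
      rw [show x = r from Fin.ext hxr]
    -- expand the first summand
    have hLHS : DU R j (pSlot R f g h i (Finsupp.single t 1))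
        = ∑ r : Fin ((t i).1 + 1), ∑ s : Fin (dj + 2),
            Finsupp.single
              (Function.update
                (Function.update (mixT f g (i : ℕ) t) i (prismEnt h i t r)) j
                ⟨dj, ((if (j : ℕ) < (i : ℕ) then f.f j else g.f j).comp sj).comp
                  (faceCM dj s)⟩)
              ((((1 : R) * (-1 : R) ^ (eps t i + (r : ℕ)))
                * (-1 : R) ^ eps (Function.update (mixT f g (i : ℕ) t) i (prismEnt h i t r)) j)
                * (-1 : R) ^ (s : ℕ)) := by
      rw [pSlot_single_eval]
      refine (map_sum _ _ _).trans ?_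
      refine Finset.sum_congr rfl fun r _ => ?_
      erw [DU_single, hupd r, htj, hmor]
      have hdb : dBasis R (⟨dj + 1,
            ((if (j : ℕ) < (i : ℕ) then f.f j else g.f j).comp sj :
              C(SimplexT (dj+1), ↥(B.C j)))⟩ : SST ↥(B.C j))
          = ∑ s : Fin (dj + 2), Finsupp.single
              (⟨dj, ((if (j : ℕ) < (i : ℕ) then f.f j else g.f j).comp sj).comp
                (faceCM dj s)⟩ : SST ↥(B.C j)) ((-1 : R) ^ (s : ℕ)) := rfl
      rw [hdb, map_sum, Finset.smul_sum]
      refine Finset.sum_congr rfl fun s _ => ?_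
      erw [slotIns_single, Finsupp.smul_single, smul_eq_mul]
    -- expand the second summand
    have hRHS : pSlot R f g h i (DU R j (Finsupp.single t 1))
        = ∑ s : Fin (dj + 2), ∑ r : Fin ((t i).1 + 1),
            Finsupp.single
              (Function.update
                (Function.update (mixT f g (i : ℕ) t) j
                  (morEnt f g (i : ℕ) j ⟨dj, sj.comp (faceCM dj s)⟩)) i (prismEnt h i t r))
              ((((1 : R) * (-1 : R) ^ eps t j) * (-1 : R) ^ (s : ℕ))
                * (-1 : R) ^ (eps (Function.update t j
                    (⟨dj, sj.comp (faceCM dj s)⟩ : SST ↥(A.C j))) i + (r : ℕ))) := by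
      rw [DU_single, htj]
      have hdb : dBasis R (⟨dj + 1, sj⟩ : SST ↥(A.C j))
          = ∑ s : Fin (dj + 2), Finsupp.single
              (⟨dj, sj.comp (faceCM dj s)⟩ : SST ↥(A.C j)) ((-1 : R) ^ (s : ℕ)) := rfl
      rw [hdb, map_sum, Finset.smul_sum, map_sum]
      refine Finset.sum_congr rfl fun s _ => ?_
      erw [slotIns_single, Finsupp.smul_single, pSlot_single_eval]
      have ecast : ((Function.update t j (⟨dj, sj.comp (faceCM dj s)⟩ : SST ↥(A.C j))) i).1 + 1
          = (t i).1 + 1 := by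
        erw [Function.update_of_ne (Ne.symm hij)]
      rw [← Fin.sum_congr' _ ecast]
      refine Finset.sum_congr rfl fun r _ => ?_
      rw [mixT_update, hPE _ r (Fin.cast ecast r) rfl, Fin.coe_cast, smul_eq_mul]
    rw [hLHS, hRHS, Finset.sum_comm (γ := Fin (dj + 2))]
    erw [← Finset.sum_add_distrib]
    refine Finset.sum_eq_zero fun r _ => ?_
    erw [← Finset.sum_add_distrib]
    refine Finset.sum_eq_zero fun s _ => ?_
    have htup : Function.update
          (Function.update (mixT f g (i : ℕ) t) i (prismEnt h i t r)) j
          (⟨dj, ((if (j : ℕ) < (i : ℕ) then f.f j else g.f j).comp sj).comp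
            (faceCM dj s)⟩ : SST ↥(B.C j))
        = Function.update
            (Function.update (mixT f g (i : ℕ) t) j
              (morEnt f g (i : ℕ) j ⟨dj, sj.comp (faceCM dj s)⟩)) i (prismEnt h i t r) := by
      rw [hmor]
      exact Function.update_comm (Ne.symm hij) _ _ _
    erw [htup, ← Finsupp.single_add, Finsupp.single_eq_zero]
    -- sign bookkeeping
    simp only [one_mul, ← pow_add]
    rcases Nat.lt_or_ge (j : ℕ) (i : ℕ) with hlt | hge
    · have hYj : eps (Function.update (mixT f g (i : ℕ) t) i (prismEnt h i t r)) j
          = eps t j := by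
        rw [eps_update_ge _ (by omega), eps_mix]
      have h5 := eps_update_lt (t := t) (⟨dj, sj.comp (faceCM dj s)⟩ : SST ↥(A.C j)) hlt
      rw [htj] at h5
      have hti : eps (Function.update t j (⟨dj, sj.comp (faceCM dj s)⟩ : SST ↥(A.C j))) i
          + (dj + 1) = eps t i + dj := h5
      exact neg_one_pow_add_eq_zero _ _ (by omega)
    · have hlt' : (i : ℕ) < (j : ℕ) := by
        rcases Nat.lt_or_ge (i : ℕ) (j : ℕ) with h' | h'
        · exact h'
        · exact absurd (Fin.ext (by omega)) hij
      have h5 := eps_update_lt (t := mixT f g (i : ℕ) t) (prismEnt h i t r) hlt'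
      rw [eps_mix, mixT_fst] at h5
      have hYj : eps (Function.update (mixT f g (i : ℕ) t) i (prismEnt h i t r)) j
          + (t i).1 = eps t j + ((t i).1 + 1) := h5
      have hti : eps (Function.update t j (⟨dj, sj.comp (faceCM dj s)⟩ : SST ↥(A.C j))) i
          = eps t i := eps_update_ge _ (by omega)
      exact neg_one_pow_add_eq_zero _ _ (by omega)

end Assembly

section Master

variable {A : InterSp.{u} n} {B : InterSp.{v} n}

/-- Total ungraded differential. -/
noncomputable def dUop : UCh R A →ₗ[R] UCh R A := ∑ j : Fin n, DU R j

/-- Total ungraded prism operator. -/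
noncomputable def PUop (f g : InterSp.Mor A B) (h : InterSp.FHtpy f g) :
    UCh R A →ₗ[R] UCh R B := ∑ i : Fin n, pSlot R f g h i

/-- Mixed induced map. -/
noncomputable def mixMap (f g : InterSp.Mor A B) (c : ℕ) : UCh R A →ₗ[R] UCh R B :=
  Finsupp.lift _ R _ fun t => Finsupp.single (mixT f g c t) 1

lemma mixMap_single (f g : InterSp.Mor A B) (c : ℕ) (t : TupF A) (c' : R) :
    mixMap R f g c (Finsupp.single t c') = Finsupp.single (mixT f g c t) c' := by
  simp [mixMap, Finsupp.lift_apply, Finsupp.sum_single_index, Finsupp.smul_single]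

lemma masterU_single (f g : InterSp.Mor A B) (h : InterSp.FHtpy f g) (t : TupF A) :
    dUop R (PUop R f g h (Finsupp.single t 1)) + PUop R f g h (dUop R (Finsupp.single t 1))
      = mixMap R f g 0 (Finsupp.single t 1) - mixMap R f g n (Finsupp.single t 1) := by
  have expand : dUop R (PUop R f g h (Finsupp.single t 1))
        + PUop R f g h (dUop R (Finsupp.single t 1))
      = ∑ i : Fin n, ∑ j : Fin n,
          (DU R j (pSlot R f g h i (Finsupp.single t 1))
            + pSlot R f g h i (DU R j (Finsupp.single t 1))) := by
    simp only [dUop, PUop, LinearMap.sum_apply]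
    have e1 : (∑ j : Fin n, DU R j (∑ i : Fin n, pSlot R f g h i (Finsupp.single t 1)))
        = ∑ i : Fin n, ∑ j : Fin n, DU R j (pSlot R f g h i (Finsupp.single t 1)) := by
      rw [Finset.sum_comm]
      exact Finset.sum_congr rfl fun j _ => map_sum _ _ _
    have e2 : (∑ i : Fin n, pSlot R f g h i (∑ j : Fin n, DU R j (Finsupp.single t 1)))
        = ∑ i : Fin n, ∑ j : Fin n, pSlot R f g h i (DU R j (Finsupp.single t 1)) := by
      exact Finset.sum_congr rfl fun i _ => map_sum _ _ _
    rw [e1, e2, ← Finset.sum_add_distrib]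
    exact Finset.sum_congr rfl fun i _ => (Finset.sum_add_distrib).symm
  rw [expand]
  have diag : ∀ i : Fin n,
      (∑ j : Fin n, (DU R j (pSlot R f g h i (Finsupp.single t 1))
          + pSlot R f g h i (DU R j (Finsupp.single t 1))))
        = Finsupp.single (mixT f g (i : ℕ) t) 1
          - Finsupp.single (mixT f g ((i : ℕ) + 1) t) 1 := by
    intro i
    rw [Finset.sum_eq_single_of_mem i (Finset.mem_univ i)
      (fun j _ hj => L2 R f g h hj t)]
    exact L1 R f g h i t
  rw [Finset.sum_congr rfl fun i _ => diag i, mixMap_single, mixMap_single]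
  rw [Fin.sum_univ_eq_sum_range
    (fun c => Finsupp.single (mixT f g c t) (1 : R) - Finsupp.single (mixT f g (c + 1) t) 1)]
  exact Finset.sum_range_sub' (fun c => Finsupp.single (mixT f g c t) (1 : R)) n

lemma masterU (f g : InterSp.Mor A B) (h : InterSp.FHtpy f g) (x : UCh R A) :
    dUop R (PUop R f g h x) + PUop R f g h (dUop R x)
      = mixMap R f g 0 x - mixMap R f g n x := by
  induction x using Finsupp.induction_linear with
  | zero => simp
  | add a b ha hb =>
    simp only [map_add]
    calc dUop R (PUop R f g h a) + dUop R (PUop R f g h b)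
          + (PUop R f g h (dUop R a) + PUop R f g h (dUop R b))
        = (dUop R (PUop R f g h a) + PUop R f g h (dUop R a))
          + (dUop R (PUop R f g h b) + PUop R f g h (dUop R b)) := by abel
      _ = (mixMap R f g 0 a - mixMap R f g n a) + (mixMap R f g 0 b - mixMap R f g n b) := by
          rw [ha, hb]
      _ = mixMap R f g 0 a + mixMap R f g 0 b - (mixMap R f g n a + mixMap R f g n b) := by
          abel
  | single t c =>
    have hc : (Finsupp.single t c : UCh R A) = c • Finsupp.single t 1 := by
      rw [Finsupp.smul_single, smul_eq_mul, mul_one]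
    rw [hc]
    simp only [map_smul]
    rw [← smul_add, ← smul_sub]
    exact congrArg (fun z => c • z) (masterU_single R f g h t)

lemma mixMap_zero (f g : InterSp.Mor A B) : mixMap R f g 0 = mixMap R g g 0 := by
  refine Finsupp.lhom_ext fun t c => ?_
  rw [mixMap_single, mixMap_single]
  congr 1

lemma mixMap_top (f g : InterSp.Mor A B) : mixMap R f g n = mixMap R f f 0 := by
  refine Finsupp.lhom_ext fun t c => ?_
  rw [mixMap_single, mixMap_single]
  congr 1
  funext k
  unfold mixT morEnt
  split_ifs with h1 h2
  · rfl
  · rfl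
  · exact absurd k.isLt h1
  · exact absurd k.isLt h1

end Master

section Graded

variable {A : InterSp.{u} n} {B : InterSp.{v} n}

/-- Forget the grading. -/
noncomputable def grU (A' : InterSp.{u} n) (p : ℕ) : Ch R A' p →ₗ[R] UCh R A' :=
  Finsupp.lmapDomain R R Subtype.val

lemma grU_injective (A' : InterSp.{u} n) (p : ℕ) : Function.Injective (grU R A' p) :=
  Finsupp.mapDomain_injective Subtype.val_injective

lemma grU_single (A' : InterSp.{u} n) (p : ℕ) (sg : Tup A' p) (c : R) :
    grU R A' p (Finsupp.single sg c) = Finsupp.single sg.1 c := by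
  simp [grU, Finsupp.lmapDomain_apply, Finsupp.mapDomain_single]
  exact Finsupp.mapDomain_single

lemma grU_chMap (f : InterSp.Mor A B) (p : ℕ) (x : Ch R A p) :
    grU R B p (chMap R f p x) = mixMap R f f 0 (grU R A p x) := by
  induction x using Finsupp.induction_linear with
  | zero => simp
  | add a b ha hb => simp [map_add, ha, hb]
  | single sg c =>
    have h1 : chMap R f p (Finsupp.single sg c)
        = Finsupp.single (⟨fun i => ⟨(sg.1 i).1, (f.f i).comp (sg.1 i).2⟩, sg.2⟩ : Tup B p) c := by
      simp [chMap, Finsupp.lift_apply, Finsupp.sum_single_index, Finsupp.smul_single]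
      exact Finsupp.smul_single_one _ _
    erw [h1, grU_single, grU_single, mixMap_single]
    congr 1

lemma grU_dTerm (p : ℕ) (sg : Tup A (p + 1)) (i : Fin n) :
    grU R A p (dTerm R sg i) = DU R i (Finsupp.single sg.1 1) := by
  rw [DU_single, one_mul]
  unfold dTerm
  split
  next f' heq =>
    rw [map_zero, dBasis_of_dim_zero R (sg.1 i) (by rw [heq]), map_zero, smul_zero]
  next q f' heq =>
    rw [map_sum]
    have hdb : dBasis R (sg.1 i) = ∑ r : Fin (q + 2),
        Finsupp.single (⟨q, f'.comp (faceCM q r)⟩ : SST ↥(A.C i)) ((-1 : R) ^ (r : ℕ)) := by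
      rw [heq]
      rfl
    rw [hdb, map_sum, Finset.smul_sum]
    refine Finset.sum_congr rfl fun r _ => ?_
    erw [grU_single, slotIns_single, Finsupp.smul_single]
    congr 1
    show ((((-1 : ℤ) ^ ((∑ k ∈ Finset.univ.filter (fun k : Fin n => (k : ℕ) < (i : ℕ)),
        (sg.1 k).1) + (r : ℕ))) : ℤ) : R) = _
    push_cast
    rw [pow_add, smul_eq_mul]
    rfl

lemma grU_dCh (A' : InterSp.{u} n) (p : ℕ) (x : Ch R A' (p + 1)) :
    grU R A' p (dCh R A' p x) = dUop R (grU R A' (p + 1) x) := by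
  induction x using Finsupp.induction_linear with
  | zero => simp
  | add a b ha hb => simp [map_add, ha, hb]
  | single sg c =>
    have h1 : dCh R A' p (Finsupp.single sg c) = c • ∑ i : Fin n, dTerm R sg i := by
      simp [dCh, Finsupp.lift_apply, Finsupp.sum_single_index]
    have hc : (Finsupp.single sg c : Ch R A' (p + 1)) = c • Finsupp.single sg 1 := by
      rw [Finsupp.smul_single, smul_eq_mul, mul_one]
    rw [h1, hc, map_smul, map_smul, map_smul, grU_single, dUop, LinearMap.sum_apply, map_sum]
    congr 1
    exact Finset.sum_congr rfl fun i _ => grU_dTerm R p sg i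

lemma dUop_grU_zero (A' : InterSp.{u} n) (x : Ch R A' 0) :
    dUop R (grU R A' 0 x) = 0 := by
  induction x using Finsupp.induction_linear with
  | zero => simp
  | add a b ha hb => simp [map_add, ha, hb]
  | single sg c =>
    rw [grU_single, dUop, LinearMap.sum_apply]
    refine Finset.sum_eq_zero fun j _ => ?_
    have hd : (sg.1 j).1 = 0 := by
      have h2 := sg.2
      unfold degT at h2
      exact Finset.sum_eq_zero_iff.1 h2 j (Finset.mem_univ j)
    rw [DU_single, dBasis_of_dim_zero R (sg.1 j) hd, map_zero, smul_zero]

/-- The graded prism operator. -/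
noncomputable def Pten (f g : InterSp.Mor A B) (h : InterSp.FHtpy f g) (p : ℕ) :
    Ch R A p →ₗ[R] Ch R B (p + 1) :=
  Finsupp.lift _ R _ fun sg : Tup A p =>
    ∑ i : Fin n, ∑ r : Fin ((sg.1 i).1 + 1),
      Finsupp.single
        (⟨Function.update (mixT f g (i : ℕ) sg.1) i (prismEnt h i sg.1 r), by
          have h2 := sg.2
          show degT _ = p + 1
          unfold degT at h2 ⊢
          have e1 : ∀ k, ((Function.update (mixT f g (i : ℕ) sg.1) i
              (prismEnt h i sg.1 r)) k).1
              = Function.update (fun k => (sg.1 k).1) i ((sg.1 i).1 + 1) k := by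
            intro k
            rcases eq_or_ne k i with rfl | hk
            · exact (congrArg Sigma.fst (Function.update_self k _ _)).trans
                (Function.update_self k _ (fun k => (sg.1 k).1)).symm
            · exact (congrArg Sigma.fst (Function.update_of_ne hk _ _)).trans
                ((mixT_fst f g _ sg.1 k).trans (Function.update_of_ne hk _ (fun k => (sg.1 k).1)).symm)
          rw [Finset.sum_congr rfl fun k _ => e1 k,
            Finset.sum_update_of_mem (Finset.mem_univ i)]
          have e2 := Finset.sum_eq_sum_sdiff_singleton_add (Finset.mem_univ i)
            (fun k => (sg.1 k).1)
          omega⟩ : Tup B (p + 1))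
        ((-1 : R) ^ (eps sg.1 i + (r : ℕ)))

lemma Pten_single (f g : InterSp.Mor A B) (h : InterSp.FHtpy f g) (p : ℕ) (sg : Tup A p)
    (c : R) :
    Pten R f g h p (Finsupp.single sg c)
      = c • ∑ i : Fin n, ∑ r : Fin ((sg.1 i).1 + 1),
          Finsupp.single
            (⟨Function.update (mixT f g (i : ℕ) sg.1) i (prismEnt h i sg.1 r), by
              have h2 := sg.2
              show degT _ = p + 1
              unfold degT at h2 ⊢
              have e1 : ∀ k, ((Function.update (mixT f g (i : ℕ) sg.1) i
                  (prismEnt h i sg.1 r)) k).1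
                  = Function.update (fun k => (sg.1 k).1) i ((sg.1 i).1 + 1) k := by
                intro k
                rcases eq_or_ne k i with rfl | hk
                · exact (congrArg Sigma.fst (Function.update_self k _ _)).trans
                    (Function.update_self k _ (fun k => (sg.1 k).1)).symm
                · exact (congrArg Sigma.fst (Function.update_of_ne hk _ _)).trans
                    ((mixT_fst f g _ sg.1 k).trans (Function.update_of_ne hk _ (fun k => (sg.1 k).1)).symm)
              rw [Finset.sum_congr rfl fun k _ => e1 k,
                Finset.sum_update_of_mem (Finset.mem_univ i)]
              have e2 := Finset.sum_eq_sum_sdiff_singleton_add (Finset.mem_univ i)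
                (fun k => (sg.1 k).1)
              omega⟩ : Tup B (p + 1))
            ((-1 : R) ^ (eps sg.1 i + (r : ℕ))) := by
  simp [Pten, Finsupp.lift_apply, Finsupp.sum_single_index]
  rfl

lemma grU_Pten (f g : InterSp.Mor A B) (h : InterSp.FHtpy f g) (p : ℕ) (x : Ch R A p) :
    grU R B (p + 1) (Pten R f g h p x) = PUop R f g h (grU R A p x) := by
  induction x using Finsupp.induction_linear with
  | zero => simp
  | add a b ha hb => simp [map_add, ha, hb]
  | single sg c =>
    erw [Pten_single, map_smul, map_sum, grU_single, PUop, LinearMap.sum_apply]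
    have hc : (Finsupp.single sg.1 c : UCh R A) = c • Finsupp.single sg.1 1 := by
      rw [Finsupp.smul_single, smul_eq_mul, mul_one]
    rw [hc]
    rw [show (∑ i : Fin n, pSlot R f g h i (c • Finsupp.single sg.1 1))
        = c • ∑ i : Fin n, pSlot R f g h i (Finsupp.single sg.1 1) by
      rw [Finset.smul_sum]; exact Finset.sum_congr rfl fun i _ => map_smul _ _ _]
    congr 1
    refine Finset.sum_congr rfl fun i _ => ?_
    refine (map_sum _ _ _).trans ?_
    rw [pSlot_single_eval]
    refine Finset.sum_congr rfl fun r _ => ?_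
    erw [grU_single, one_mul]
    rfl

end Graded

section Final

variable {A : InterSp.{u} n} {B : InterSp.{v} n}

lemma interEmpty_tup (f g : InterSp.Mor A B) (h : InterSp.FHtpy f g) (sg : TupF A)
    (hsg : interEmpty sg) (i : Fin n) (r : Fin ((sg i).1 + 1)) :
    interEmpty (Function.update (mixT f g (i : ℕ) sg) i (prismEnt h i sg r)) := by
  unfold interEmpty at hsg ⊢
  rw [Set.eq_empty_iff_forall_notMem]
  intro w hw
  have hw' := Set.mem_iInter.1 hw
  have hpt : ∀ k, ∃ (u : ↥(A.C k)) (s : I), u ∈ Set.range (sg k).2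
      ∧ ((h.H k (u, s)) : B.X) = w := by
    intro k
    obtain ⟨b, hb, hbw⟩ := hw' k
    rcases eq_or_ne k i with rfl | hk
    · erw [Function.update_self] at hb
      obtain ⟨y, hy⟩ := hb
      refine ⟨(sg k).2 (prismMap (sg k).1 r y).1, (prismMap (sg k).1 r y).2,
        ⟨(prismMap (sg k).1 r y).1, rfl⟩, ?_⟩
      rw [← hbw, ← hy]
      rfl
    · erw [Function.update_of_ne hk] at hb
      rcases Nat.lt_or_ge (k : ℕ) (i : ℕ) with hlt | hge
      · rw [show mixT f g (i : ℕ) sg k = ⟨(sg k).1, (f.f k).comp (sg k).2⟩ from by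
          unfold mixT morEnt; rw [if_pos hlt]] at hb
        obtain ⟨y, hy⟩ := hb
        refine ⟨(sg k).2 y, 0, ⟨y, rfl⟩, ?_⟩
        rw [h.h0 k ((sg k).2 y), ← hbw, ← hy]
        rfl
      · rw [show mixT f g (i : ℕ) sg k = ⟨(sg k).1, (g.f k).comp (sg k).2⟩ from by
          unfold mixT morEnt; rw [if_neg (by omega)]] at hb
        obtain ⟨y, hy⟩ := hb
        refine ⟨(sg k).2 y, 1, ⟨y, rfl⟩, ?_⟩
        rw [h.h1 k ((sg k).2 y), ← hbw, ← hy]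
        rfl
  obtain ⟨ui, si, hui, hwi⟩ := hpt i
  have hmem : (ui : A.X) ∈ ⋂ k, Subtype.val '' Set.range (sg k).2 := by
    refine Set.mem_iInter.2 fun k => ?_
    obtain ⟨uk, sk, huk, hwk⟩ := hpt k
    rcases eq_or_ne k i with rfl | hk
    · exact ⟨ui, hui, rfl⟩
    · have he : ((h.H i (ui, si)) : B.X) = ((h.H k (uk, sk)) : B.X) := by rw [hwi, hwk]
      exact ⟨uk, huk, ((h.cond i k (Ne.symm hk) ui uk si sk).1 he).symm⟩
  rw [hsg] at hmem
  exact hmem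

lemma single_mem_Tsub {A' : InterSp.{u} n} {p : ℕ} (sg : Tup A' p) (c : R)
    (hE : interEmpty sg.1) : Finsupp.single sg c ∈ Tsub R A' p := by
  have hc : (Finsupp.single sg c : Ch R A' p) = c • Finsupp.single sg 1 := by
    rw [Finsupp.smul_single, smul_eq_mul, mul_one]
  rw [hc]
  exact Submodule.smul_mem _ _ (Submodule.subset_span ⟨sg, hE, rfl⟩)

lemma Pten_Tsub (f g : InterSp.Mor A B) (h : InterSp.FHtpy f g) (p : ℕ) {x : Ch R A p}
    (hx : x ∈ Tsub R A p) : Pten R f g h p x ∈ Tsub R B (p + 1) := by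
  refine Submodule.span_induction (p := fun y _ => Pten R f g h p y ∈ Tsub R B (p + 1))
    ?_ ?_ ?_ ?_ hx
  · rintro y ⟨sg, hsg, rfl⟩
    rw [Pten_single, one_smul]
    refine Submodule.sum_mem _ fun i _ => Submodule.sum_mem _ fun r _ => ?_
    exact single_mem_Tsub R _ _ (interEmpty_tup f g h sg.1 hsg i r)
  · show Pten R f g h p 0 ∈ Tsub R B (p + 1)
    rw [map_zero]; exact Submodule.zero_mem _
  · intro a b _ _ ha hb
    show Pten R f g h p (a + b) ∈ Tsub R B (p + 1)
    rw [map_add]; exact Submodule.add_mem _ ha hb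
  · intro c a _ ha
    show Pten R f g h p (c • a) ∈ Tsub R B (p + 1)
    rw [map_smul]; exact Submodule.smul_mem _ _ ha

lemma step (f g : InterSp.Mor A B) (hh : InterSp.FHtpy f g) (p : ℕ) (x : Ch R A p)
    (hx : dFrom R A p x ∈ Tsub R A (p - 1)) :
    ∃ y : Ch R B (p + 1), chMap R f p x - chMap R g p x - dCh R B p y ∈ Tsub R B p := by
  refine ⟨-(Pten R f g hh p x), ?_⟩
  rw [map_neg, sub_neg_eq_add]
  cases p with
  | zero =>
    have hkey : chMap R f 0 x - chMap R g 0 x + dCh R B 0 (Pten R f g hh 0 x) = 0 := by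
      apply grU_injective R B 0
      rw [map_zero, map_add, map_sub, grU_chMap, grU_chMap, grU_dCh, grU_Pten]
      have hm := masterU R f g hh (grU R A 0 x)
      rw [dUop_grU_zero R A x, map_zero, add_zero, mixMap_zero R f g, mixMap_top R f g] at hm
      rw [hm]
      abel
    rw [hkey]
    exact Submodule.zero_mem _
  | succ q =>
    have hkey : chMap R f (q + 1) x - chMap R g (q + 1) x
          + dCh R B (q + 1) (Pten R f g hh (q + 1) x)
        = -(Pten R f g hh q (dCh R A q x)) := by
      apply grU_injective R B (q + 1)
      rw [map_add, map_sub, grU_chMap, grU_chMap, grU_dCh, grU_Pten, map_neg, grU_Pten,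
        grU_dCh]
      have hm := masterU R f g hh (grU R A (q + 1) x)
      rw [mixMap_zero R f g, mixMap_top R f g] at hm
      rw [eq_sub_of_add_eq hm]
      abel
    rw [hkey]
    have hx' : dCh R A q x ∈ Tsub R A q := hx
    exact Submodule.neg_mem _ (Pten_Tsub R f g hh q hx')

end Final

end Stmt14Aux

/-- homotopic morphisms of interaction spaces induce equal maps
on interaction singular homology: every cycle of `IS₋({Xᵢ})` (a chain whose
boundary lies in `T₋`) is sent by `f^♯` and `g^♯` to chains that differ by a
boundary, modulo `T₋({Yᵢ})`. -/
theorem stmt14 {A B : InterSp n} (f g : InterSp.Mor A B)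
    (h : InterSp.Homotopic f g) (p : ℕ) :
    ∀ x : Ch R A p, dFrom R A p x ∈ Tsub R A (p - 1) →
      ∃ y : Ch R B (p + 1),
        chMap R f p x - chMap R g p x - dCh R B p y ∈ Tsub R B p := by
  intro x hx
  have h' : Relation.ReflTransGen InterSp.FHomotopic f g := h
  induction h' with
  | refl =>
    refine ⟨0, ?_⟩
    rw [map_zero, sub_zero, sub_self]
    exact Submodule.zero_mem _
  | @tail b c hab hbc ih =>
    obtain ⟨y₁, hy₁⟩ := ih hab
    obtain ⟨hh⟩ := hbc
    obtain ⟨y₂, hy₂⟩ := Stmt14Aux.step R b c hh p x hx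
    refine ⟨y₁ + y₂, ?_⟩
    have hsplit : chMap R f p x - chMap R c p x - dCh R B p (y₁ + y₂)
        = (chMap R f p x - chMap R b p x - dCh R B p y₁)
          + (chMap R b p x - chMap R c p x - dCh R B p y₂) := by
      rw [map_add]
      abel
    rw [hsplit]
    exact Submodule.add_mem _ hy₁ hy₂
end

section
/- For an interaction simplicial complex (K, {K_i}) with n subcomplexes, the submodule D_*({K_i}) of ⊗_{i=1}^n C_*(K_i) generated by elementary tensors σ_1⊗⋯⊗σ_n of simplices with ⋂_i σ_i = ∅ is a subchain complex of the tensor product chain complex. -/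
universe u

/-- An abstract simplicial complex on a vertex set `V`. -/
structure ASC (V : Type u) where
  faces : Set (Finset V)
  nonempty_of_mem : ∀ s ∈ faces, s.Nonempty
  down_closed : ∀ s ∈ faces, ∀ t, t ⊆ s → t.Nonempty → t ∈ faces

variable {V : Type} [DecidableEq V] [LinearOrder V] {n : ℕ}

/-- A tuple of simplices, one in each subcomplex `K i`. -/
def TupS (K : Fin n → ASC V) : Type _ := ∀ i, {s : Finset V // s ∈ (K i).faces}

/-- The total degree of a tuple of simplices. -/
def degS {K : Fin n → ASC V} (sg : TupS K) : ℕ := ∑ i, ((sg i).1.card - 1)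

/-- A tuple of simplices of total degree `p`: a basis element of degree `p` of
the tensor product `⊗ᵢ C₋(Kᵢ)` of simplicial chain complexes. -/
def TupSg (K : Fin n → ASC V) (p : ℕ) : Type _ := {sg : TupS K // degS sg = p}

variable (R : Type) [CommRing R]

/-- The degree-`p` part of the tensor product `⊗ᵢ C₋(Kᵢ)` of the simplicial
chain complexes of the subcomplexes `Kᵢ`, over `R`. -/
abbrev SCh (K : Fin n → ASC V) (p : ℕ) : Type _ := TupSg K p →₀ R

/-- The summand of the tensor-product differential acting on the `i`-th factor
of a basis tuple, with its Koszul sign: the alternating sum of the faces of the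
`i`-th simplex. -/
noncomputable def dTermS {K : Fin n → ASC V} {p : ℕ} (sg : TupSg K (p + 1)) (i : Fin n) :
    SCh R K p :=
  if h : (sg.1 i).1.card ≤ 1 then 0
  else
    ∑ v ∈ (sg.1 i).1.attach,
      Finsupp.single
        (⟨Function.update sg.1 i
            ⟨(sg.1 i).1.erase v.1, by
              refine (K i).down_closed _ (sg.1 i).2 _ (Finset.erase_subset _ _) ?_
              rw [← Finset.card_pos, Finset.card_erase_of_mem v.2]
              omega⟩, by
          have h2 := sg.2
          show degS _ = p
          unfold degS at h2 ⊢
          have e1 : ∀ k, ((Function.update sg.1 i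
              ⟨(sg.1 i).1.erase v.1, by
                refine (K i).down_closed _ (sg.1 i).2 _ (Finset.erase_subset _ _) ?_
                rw [← Finset.card_pos, Finset.card_erase_of_mem v.2]
                omega⟩) k).1.card - 1
              = Function.update (fun k => (sg.1 k).1.card - 1) i
                  (((sg.1 i).1.erase v.1).card - 1) k := by
            intro k
            rcases eq_or_ne k i with rfl | hk
            · erw [Function.update_self]; simp
            · erw [Function.update_of_ne hk, Function.update_of_ne hk]
          rw [Finset.sum_congr rfl fun k _ => e1 k,
            Finset.sum_update_of_mem (Finset.mem_univ i)]
          have e2 := Finset.sum_eq_sum_sdiff_singleton_add (Finset.mem_univ i)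
            (fun k => (sg.1 k).1.card - 1)
          have e3 : ((sg.1 i).1.erase v.1).card = (sg.1 i).1.card - 1 :=
            Finset.card_erase_of_mem v.2
          have e4 : (sg.1 i).1.Nonempty := (K i).nonempty_of_mem _ (sg.1 i).2
          have e5 : 0 < (sg.1 i).1.card := Finset.card_pos.2 e4
          omega⟩ : TupSg K p)
        ((((-1 : ℤ) ^
          ((∑ k ∈ Finset.univ.filter (fun k : Fin n => (k : ℕ) < (i : ℕ)), ((sg.1 k).1.card - 1))
            + ((sg.1 i).1.filter (fun w => w < v.1)).card) : ℤ) : R))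

/-- The differential of the tensor product `⊗ᵢ C₋(Kᵢ)` of simplicial chain
complexes. -/
noncomputable def dSCh (K : Fin n → ASC V) (p : ℕ) : SCh R K (p + 1) →ₗ[R] SCh R K p :=
  Finsupp.lift (SCh R K p) R (TupSg K (p + 1)) fun sg => ∑ i : Fin n, dTermS R sg i

/-- The differential, from degree `p` to degree `p - 1` (zero in degree `0`). -/
noncomputable def dSFrom (K : Fin n → ASC V) : ∀ p, SCh R K p →ₗ[R] SCh R K (p - 1)
  | 0 => 0
  | q + 1 => dSCh R K q

/-- The simplices of a tuple have empty common intersection. -/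
def interEmptyS {K : Fin n → ASC V} (sg : TupS K) : Prop :=
  (⋂ i, ((sg i).1 : Set V)) = (∅ : Set V)

/-- The submodule `D₋({Kᵢ})` of `⊗ᵢ C₋(Kᵢ)` generated by the elementary
tensors of simplices with empty common intersection. -/
noncomputable def Dsub (K : Fin n → ASC V) (p : ℕ) : Submodule R (SCh R K p) :=
  Submodule.span R {x | ∃ sg : TupSg K p, interEmptyS sg.1 ∧ x = Finsupp.single sg 1}

/-- for an interaction simplicial complex, the submodule
`D₋({Kᵢ})` of `⊗ᵢ C₋(Kᵢ)` generated by elementary tensors of simplices with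
empty common intersection is a subchain complex: it is closed under the
tensor-product differential. -/
theorem stmt17 (K : Fin n → ASC V) (p : ℕ) :
    ∀ x ∈ Dsub R K (p + 1), dSCh R K p x ∈ Dsub R K p := by
  intro x hx
  induction hx using Submodule.span_induction with
  | mem x hx =>
    obtain ⟨sg, hint, rfl⟩ := hx
    have hd : dSCh R K p (Finsupp.single sg 1) = ∑ i : Fin n, dTermS R sg i := by
      simp [dSCh]
    rw [hd]
    refine Submodule.sum_mem _ fun i _ => ?_
    unfold dTermS
    split
    · exact Submodule.zero_mem _
    · refine Submodule.sum_mem _ fun v _ => ?_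
      erw [← Finsupp.smul_single_one]
      refine Submodule.smul_mem _ _ (Submodule.subset_span ⟨_, ?_, rfl⟩)
      -- empty intersection is preserved
      show (⋂ k, _) = (∅ : Set V)
      rw [Set.eq_empty_iff_forall_notMem]
      intro w hw
      have : w ∈ (⋂ k, ((sg.1 k).1 : Set V)) := by
        rw [Set.mem_iInter] at hw ⊢
        intro k
        have hk := hw k
        rcases eq_or_ne k i with rfl | hne
        · simp only [Function.update, dite_true] at hk
          exact Finset.mem_coe.2 (Finset.mem_of_mem_erase (Finset.mem_coe.1 hk))
        · simp only [Function.update, hne, dite_false] at hk; exact hk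
      rw [hint] at this
      exact this
  | zero => rw [map_zero]; exact Submodule.zero_mem _
  | add x y _ _ hx hy => rw [map_add]; exact Submodule.add_mem _ hx hy
  | smul c x _ hx => rw [map_smul]; exact Submodule.smul_mem _ c hx
end
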